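/- The function f(p) = (1/2)·(−p ln p − (1−p) ln(1−p) + (1−p)^4 ln 2) on (0,1) attains a maximum value strictly greater than 0.392 and strictly less than 0.393. -/

import Mathlib

/-- The binary entropy function. -/
noncomputable def hB (p : ℝ) : ℝ := -p * Real.log p - (1 - p) * Real.log (1 - p)

lemma log_le_psi {x : ℝ} (hx : 1 ≤ x) : Real.log x ≤ (x^2 - 1)/(2*x) := by
  have hx0 : (0:ℝ) < x := by linarith
  set t := (x^2 - 1)/(2*x) with htdef
  have ht0 : 0 ≤ t := by
    apply div_nonneg (by nlinarith) (by linarith)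
  have hq := Real.quadratic_le_exp_of_nonneg ht0
  have hxle : x ≤ Real.exp t := by
    refine le_trans ?_ hq
    have hkey : 1 + t + t^2/2 - x = (x-1)^4/(8*x^2) := by
      rw [htdef]; field_simp; ring
    nlinarith [div_nonneg (pow_nonneg (by linarith : (0:ℝ) ≤ x - 1) 4)
      (by positivity : (0:ℝ) ≤ 8*x^2)]
  calc Real.log x ≤ Real.log (Real.exp t) := Real.log_le_log hx0 hxle
    _ = t := Real.log_exp t

lemma phi_le_log {x : ℝ} (hx : 1 ≤ x) : 2*(x-1)/(x+1) ≤ Real.log x := by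
  have hder : ∀ y : ℝ, 0 < y → HasDerivAt (fun z : ℝ => Real.log z - 2*(z-1)/(z+1))
      (1/y - (2*(y+1) - 2*(y-1)*1)/(y+1)^2) y := by
    intro y hy
    have hy1 : (y:ℝ) + 1 ≠ 0 := by positivity
    apply HasDerivAt.sub
    · simpa using Real.hasDerivAt_log (ne_of_gt hy)
    · have hnum : HasDerivAt (fun z : ℝ => 2*(z-1)) 2 y := by
        simpa using ((hasDerivAt_id y).sub_const 1).const_mul 2
      have hden : HasDerivAt (fun z : ℝ => z+1) 1 y := by
        simpa using (hasDerivAt_id y).add_const 1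
      exact hnum.div hden hy1
  have key : MonotoneOn (fun z : ℝ => Real.log z - 2*(z-1)/(z+1)) (Set.Ici 1) := by
    apply monotoneOn_of_deriv_nonneg (convex_Ici 1)
    · intro y hy
      simp only [Set.mem_Ici] at hy
      exact ((hder y (by linarith)).continuousAt).continuousWithinAt
    · intro y hy
      rw [interior_Ici] at hy
      simp only [Set.mem_Ioi] at hy
      exact ((hder y (by linarith)).differentiableAt).differentiableWithinAt
    · intro y hy
      rw [interior_Ici] at hy
      simp only [Set.mem_Ioi] at hy
      have hy0 : (0:ℝ) < y := by linarith
      rw [(hder y hy0).deriv]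
      have h2 : (2*(y+1) - 2*(y-1)*1)/(y+1)^2 = 4/(y+1)^2 := by ring_nf
      rw [h2, div_sub_div _ _ (ne_of_gt hy0) (by positivity)]
      apply div_nonneg ?_ (by positivity)
      nlinarith [sq_nonneg (y-1)]
  have h := key (Set.self_mem_Ici) (Set.mem_Ici.2 hx) hx
  simp only [Real.log_one] at h
  linarith [h]

lemma log_le_pow_bound {y r B : ℝ} {m : ℕ} (hy : 0 < y) (hr : 1 ≤ r) (h : y ≤ r^m)
    (hc : (m:ℝ) * ((r^2 - 1)/(2*r)) ≤ B) : Real.log y ≤ B := by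
  calc Real.log y ≤ Real.log (r^m) := Real.log_le_log hy h
    _ = m * Real.log r := by rw [Real.log_pow]
    _ ≤ m * ((r^2-1)/(2*r)) := by
        apply mul_le_mul_of_nonneg_left (log_le_psi hr) (by positivity)
    _ ≤ B := hc

lemma pow_bound_le_log {y r B : ℝ} {m : ℕ} (hr : 1 ≤ r) (h : r^m ≤ y)
    (hc : B ≤ (m:ℝ) * (2*(r-1)/(r+1))) : B ≤ Real.log y := by
  calc B ≤ (m:ℝ) * (2*(r-1)/(r+1)) := hc
    _ ≤ m * Real.log r := by
        apply mul_le_mul_of_nonneg_left (phi_le_log hr) (by positivity)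
    _ = Real.log (r^m) := by rw [Real.log_pow]
    _ ≤ Real.log y := Real.log_le_log (by positivity) h

lemma hB_tangent {c p : ℝ} (hc0 : 0 < c) (hc1 : c < 1) (hp0 : 0 ≤ p) (hp1 : p ≤ 1) :
    hB p ≤ hB c + (Real.log (1-c) - Real.log c) * (p - c) := by
  have hc1' : (0:ℝ) < 1 - c := by linarith
  rcases eq_or_lt_of_le hp0 with h0 | h0
  · rw [← h0]
    have h : hB 0 = 0 := by unfold hB; simp
    have h2 : hB c + (Real.log (1-c) - Real.log c) * ((0:ℝ) - c) = -Real.log (1-c) := by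
      unfold hB; ring
    rw [h, h2]
    simp only [neg_nonneg] at *
    have : Real.log (1-c) ≤ (1-c) - 1 := Real.log_le_sub_one_of_pos (by linarith)
    linarith
  rcases eq_or_lt_of_le hp1 with h1 | h1
  · rw [h1]
    have h : hB 1 = 0 := by unfold hB; simp
    have h2 : hB c + (Real.log (1-c) - Real.log c) * ((1:ℝ) - c) = -Real.log c := by
      unfold hB; ring
    rw [h, h2]
    have : Real.log c ≤ c - 1 := Real.log_le_sub_one_of_pos hc0
    linarith
  · have hq1 : Real.log c - Real.log p ≤ c/p - 1 := by
      have := Real.log_le_sub_one_of_pos (show (0:ℝ) < c/p by positivity)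
      rwa [Real.log_div (ne_of_gt hc0) (ne_of_gt h0)] at this
    have hq2 : Real.log (1-c) - Real.log (1-p) ≤ (1-c)/(1-p) - 1 := by
      have := Real.log_le_sub_one_of_pos (show (0:ℝ) < (1-c)/(1-p) by
        apply div_pos hc1'; linarith)
      rwa [Real.log_div (ne_of_gt hc1') (ne_of_gt (by linarith : (0:ℝ) < 1 - p))] at this
    have key : hB p - (hB c + (Real.log (1-c) - Real.log c) * (p - c))
        = p * (Real.log c - Real.log p) + (1-p) * (Real.log (1-c) - Real.log (1-p)) := by
      unfold hB; ring
    have e1 : p * (Real.log c - Real.log p) ≤ c - p := by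
      have := mul_le_mul_of_nonneg_left hq1 (le_of_lt h0)
      calc p * (Real.log c - Real.log p) ≤ p * (c/p - 1) := this
        _ = c - p := by field_simp
    have e2 : (1-p) * (Real.log (1-c) - Real.log (1-p)) ≤ p - c := by
      have h1p : (0:ℝ) < 1 - p := by linarith
      have := mul_le_mul_of_nonneg_left hq2 (le_of_lt h1p)
      calc (1-p) * (Real.log (1-c) - Real.log (1-p)) ≤ (1-p) * ((1-c)/(1-p) - 1) := this
        _ = p - c := by
            have h1p' : (1:ℝ) - p ≠ 0 := ne_of_gt h1p
            field_simp
            ring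
    linarith [key, e1, e2]

lemma continuous_F : Continuous (fun p : ℝ => (1/2) * (hB p + (1-p)^4 * Real.log 2)) := by
  have h1 : Continuous (fun p : ℝ => p * Real.log p) := Real.continuous_mul_log
  have h2 : Continuous (fun p : ℝ => (1-p) * Real.log (1-p)) :=
    h1.comp (continuous_const.sub continuous_id)
  have h : Continuous hB := by
    have : hB = fun p : ℝ => -(p * Real.log p) - (1-p) * Real.log (1-p) := by
      funext p; unfold hB; ring
    rw [this]
    exact (h1.neg).sub h2
  fun_prop


lemma logb0 : -3.426515191 ≤ Real.log ((13 : ℝ)/400) ∧ Real.log ((13 : ℝ)/400) ≤ -3.426515188 := by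
  have hsplit : Real.log ((13 : ℝ)/400) = Real.log ((26 : ℝ)/25) - 5 * Real.log 2 := by
    rw [show ((13 : ℝ)/400) = ((26 : ℝ)/25) / 2^5 by norm_num, Real.log_div (by norm_num) (by norm_num), Real.log_pow]
    norm_num
  have hu : Real.log ((26 : ℝ)/25) ≤ 0.0392207134 :=
    log_le_pow_bound (y := ((26 : ℝ)/25)) (r := 1.00015321764738) (m := 256) (by norm_num) (by norm_num)
      (by norm_num) (by norm_num)
  have hl : (0.039220713 : ℝ) ≤ Real.log ((26 : ℝ)/25) :=
    pow_bound_le_log (y := ((26 : ℝ)/25)) (r := 1.00015321764737) (m := 256) (by norm_num) (by norm_num)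
      (by norm_num)
  rw [hsplit]
  constructor
  · linarith [Real.log_two_lt_d9]
  · linarith [Real.log_two_gt_d9]

lemma logb1 : -0.033040221 ≤ Real.log ((387 : ℝ)/400) ∧ Real.log ((387 : ℝ)/400) ≤ -0.033039122 := by
  have hsplit : Real.log ((387 : ℝ)/400) = Real.log ((387 : ℝ)/200) - 1 * Real.log 2 := by
    rw [show ((387 : ℝ)/400) = ((387 : ℝ)/200) / 2^1 by norm_num, Real.log_div (by norm_num) (by norm_num), Real.log_pow]
    norm_num
  have hu : Real.log ((387 : ℝ)/200) ≤ 0.660108058 :=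
    log_le_pow_bound (y := ((387 : ℝ)/200)) (r := 1.00258187154854) (m := 256) (by norm_num) (by norm_num)
      (by norm_num) (by norm_num)
  have hl : (0.6601069607 : ℝ) ≤ Real.log ((387 : ℝ)/200) :=
    pow_bound_le_log (y := ((387 : ℝ)/200)) (r := 1.00258187154853) (m := 256) (by norm_num) (by norm_num)
      (by norm_num)
  rw [hsplit]
  constructor
  · linarith [Real.log_two_lt_d9]
  · linarith [Real.log_two_gt_d9]

lemma logb2 : -2.407945672 ≤ Real.log ((9 : ℝ)/100) ∧ Real.log ((9 : ℝ)/100) ≤ -2.407945484 := by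
  have hsplit : Real.log ((9 : ℝ)/100) = Real.log ((36 : ℝ)/25) - 4 * Real.log 2 := by
    rw [show ((9 : ℝ)/100) = ((36 : ℝ)/25) / 2^4 by norm_num, Real.log_div (by norm_num) (by norm_num), Real.log_pow]
    norm_num
  have hu : Real.log ((36 : ℝ)/25) ≤ 0.3646432369 :=
    log_le_pow_bound (y := ((36 : ℝ)/25)) (r := 1.00142540208368) (m := 256) (by norm_num) (by norm_num)
      (by norm_num) (by norm_num)
  have hl : (0.3646430519 : ℝ) ≤ Real.log ((36 : ℝ)/25) :=
    pow_bound_le_log (y := ((36 : ℝ)/25)) (r := 1.00142540208367) (m := 256) (by norm_num) (by norm_num)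
      (by norm_num)
  rw [hsplit]
  constructor
  · linarith [Real.log_two_lt_d9]
  · linarith [Real.log_two_gt_d9]

lemma logb3 : -0.094310953 ≤ Real.log ((91 : ℝ)/100) ∧ Real.log ((91 : ℝ)/100) ≤ -0.094310133 := by
  have hsplit : Real.log ((91 : ℝ)/100) = Real.log ((91 : ℝ)/50) - 1 * Real.log 2 := by
    rw [show ((91 : ℝ)/100) = ((91 : ℝ)/50) / 2^1 by norm_num, Real.log_div (by norm_num) (by norm_num), Real.log_pow]
    norm_num
  have hu : Real.log ((91 : ℝ)/50) ≤ 0.5988370473 :=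
    log_le_pow_bound (y := ((91 : ℝ)/50)) (r := 1.00234194315715) (m := 256) (by norm_num) (by norm_num)
      (by norm_num) (by norm_num)
  have hl : (0.598836228 : ℝ) ≤ Real.log ((91 : ℝ)/50) :=
    pow_bound_le_log (y := ((91 : ℝ)/50)) (r := 1.00234194315714) (m := 256) (by norm_num) (by norm_num)
      (by norm_num)
  rw [hsplit]
  constructor
  · linarith [Real.log_two_lt_d9]
  · linarith [Real.log_two_gt_d9]

lemma logb4 : -2.04022083 ≤ Real.log ((13 : ℝ)/100) ∧ Real.log ((13 : ℝ)/100) ≤ -2.040220827 := by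
  have hsplit : Real.log ((13 : ℝ)/100) = Real.log ((26 : ℝ)/25) - 3 * Real.log 2 := by
    rw [show ((13 : ℝ)/100) = ((26 : ℝ)/25) / 2^3 by norm_num, Real.log_div (by norm_num) (by norm_num), Real.log_pow]
    norm_num
  have hu : Real.log ((26 : ℝ)/25) ≤ 0.0392207134 :=
    log_le_pow_bound (y := ((26 : ℝ)/25)) (r := 1.00015321764738) (m := 256) (by norm_num) (by norm_num)
      (by norm_num) (by norm_num)
  have hl : (0.039220713 : ℝ) ≤ Real.log ((26 : ℝ)/25) :=
    pow_bound_le_log (y := ((26 : ℝ)/25)) (r := 1.00015321764737) (m := 256) (by norm_num) (by norm_num)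
      (by norm_num)
  rw [hsplit]
  constructor
  · linarith [Real.log_two_lt_d9]
  · linarith [Real.log_two_gt_d9]

lemma logb5 : -0.139262284 ≤ Real.log ((87 : ℝ)/100) ∧ Real.log ((87 : ℝ)/100) ≤ -0.139261634 := by
  have hsplit : Real.log ((87 : ℝ)/100) = Real.log ((87 : ℝ)/50) - 1 * Real.log 2 := by
    rw [show ((87 : ℝ)/100) = ((87 : ℝ)/50) / 2^1 by norm_num, Real.log_div (by norm_num) (by norm_num), Real.log_pow]
    norm_num
  have hu : Real.log ((87 : ℝ)/50) ≤ 0.5538855454 :=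
    log_le_pow_bound (y := ((87 : ℝ)/50)) (r := 1.00216595602469) (m := 256) (by norm_num) (by norm_num)
      (by norm_num) (by norm_num)
  have hl : (0.5538848971 : ℝ) ≤ Real.log ((87 : ℝ)/50) :=
    pow_bound_le_log (y := ((87 : ℝ)/50)) (r := 1.00216595602468) (m := 256) (by norm_num) (by norm_num)
      (by norm_num)
  rw [hsplit]
  constructor
  · linarith [Real.log_two_lt_d9]
  · linarith [Real.log_two_gt_d9]

lemma logb6 : -1.832581484 ≤ Real.log ((4 : ℝ)/25) ∧ Real.log ((4 : ℝ)/25) ≤ -1.832581424 := by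
  have hsplit : Real.log ((4 : ℝ)/25) = Real.log ((32 : ℝ)/25) - 3 * Real.log 2 := by
    rw [show ((4 : ℝ)/25) = ((32 : ℝ)/25) / 2^3 by norm_num, Real.log_div (by norm_num) (by norm_num), Real.log_pow]
    norm_num
  have hu : Real.log ((32 : ℝ)/25) ≤ 0.2468601162 :=
    log_le_pow_bound (y := ((32 : ℝ)/25)) (r := 1.00096476226343) (m := 256) (by norm_num) (by norm_num)
      (by norm_num) (by norm_num)
  have hl : (0.2468600588 : ℝ) ≤ Real.log ((32 : ℝ)/25) :=
    pow_bound_le_log (y := ((32 : ℝ)/25)) (r := 1.00096476226342) (m := 256) (by norm_num) (by norm_num)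
      (by norm_num)
  rw [hsplit]
  constructor
  · linarith [Real.log_two_lt_d9]
  · linarith [Real.log_two_gt_d9]

lemma logb7 : -0.174353565 ≤ Real.log ((21 : ℝ)/25) ∧ Real.log ((21 : ℝ)/25) ≤ -0.174353031 := by
  have hsplit : Real.log ((21 : ℝ)/25) = Real.log ((42 : ℝ)/25) - 1 * Real.log 2 := by
    rw [show ((21 : ℝ)/25) = ((42 : ℝ)/25) / 2^1 by norm_num, Real.log_div (by norm_num) (by norm_num), Real.log_pow]
    norm_num
  have hu : Real.log ((42 : ℝ)/25) ≤ 0.5187941486 :=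
    log_le_pow_bound (y := ((42 : ℝ)/25)) (r := 1.002028593072) (m := 256) (by norm_num) (by norm_num)
      (by norm_num) (by norm_num)
  have hl : (0.5187936158 : ℝ) ≤ Real.log ((42 : ℝ)/25) :=
    pow_bound_le_log (y := ((42 : ℝ)/25)) (r := 1.00202859307199) (m := 256) (by norm_num) (by norm_num)
      (by norm_num)
  rw [hsplit]
  constructor
  · linarith [Real.log_two_lt_d9]
  · linarith [Real.log_two_gt_d9]

lemma logb8 : -1.660731301 ≤ Real.log ((19 : ℝ)/100) ∧ Real.log ((19 : ℝ)/100) ≤ -1.660731019 := by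
  have hsplit : Real.log ((19 : ℝ)/100) = Real.log ((38 : ℝ)/25) - 3 * Real.log 2 := by
    rw [show ((19 : ℝ)/100) = ((38 : ℝ)/25) / 2^3 by norm_num, Real.log_div (by norm_num) (by norm_num), Real.log_pow]
    norm_num
  have hu : Real.log ((38 : ℝ)/25) ≤ 0.4187105216 :=
    log_le_pow_bound (y := ((38 : ℝ)/25)) (r := 1.0016369255479) (m := 256) (by norm_num) (by norm_num)
      (by norm_num) (by norm_num)
  have hl : (0.4187102415 : ℝ) ≤ Real.log ((38 : ℝ)/25) :=
    pow_bound_le_log (y := ((38 : ℝ)/25)) (r := 1.00163692554789) (m := 256) (by norm_num) (by norm_num)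
      (by norm_num)
  rw [hsplit]
  constructor
  · linarith [Real.log_two_lt_d9]
  · linarith [Real.log_two_gt_d9]

lemma logb9 : -0.210721175 ≤ Real.log ((81 : ℝ)/100) ∧ Real.log ((81 : ℝ)/100) ≤ -0.210720745 := by
  have hsplit : Real.log ((81 : ℝ)/100) = Real.log ((81 : ℝ)/50) - 1 * Real.log 2 := by
    rw [show ((81 : ℝ)/100) = ((81 : ℝ)/50) / 2^1 by norm_num, Real.log_div (by norm_num) (by norm_num), Real.log_pow]
    norm_num
  have hu : Real.log ((81 : ℝ)/50) ≤ 0.4824264348 :=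
    log_le_pow_bound (y := ((81 : ℝ)/50)) (r := 1.00188625388845) (m := 256) (by norm_num) (by norm_num)
      (by norm_num) (by norm_num)
  have hl : (0.4824260064 : ℝ) ≤ Real.log ((81 : ℝ)/50) :=
    pow_bound_le_log (y := ((81 : ℝ)/50)) (r := 1.00188625388844) (m := 256) (by norm_num) (by norm_num)
      (by norm_num)
  rw [hsplit]
  constructor
  · linarith [Real.log_two_lt_d9]
  · linarith [Real.log_two_gt_d9]

lemma logb10 : -1.480605315 ≤ Real.log ((91 : ℝ)/400) ∧ Real.log ((91 : ℝ)/400) ≤ -1.480604493 := by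
  have hsplit : Real.log ((91 : ℝ)/400) = Real.log ((91 : ℝ)/50) - 3 * Real.log 2 := by
    rw [show ((91 : ℝ)/400) = ((91 : ℝ)/50) / 2^3 by norm_num, Real.log_div (by norm_num) (by norm_num), Real.log_pow]
    norm_num
  have hu : Real.log ((91 : ℝ)/50) ≤ 0.5988370473 :=
    log_le_pow_bound (y := ((91 : ℝ)/50)) (r := 1.00234194315715) (m := 256) (by norm_num) (by norm_num)
      (by norm_num) (by norm_num)
  have hl : (0.598836228 : ℝ) ≤ Real.log ((91 : ℝ)/50) :=
    pow_bound_le_log (y := ((91 : ℝ)/50)) (r := 1.00234194315714) (m := 256) (by norm_num) (by norm_num)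
      (by norm_num)
  rw [hsplit]
  constructor
  · linarith [Real.log_two_lt_d9]
  · linarith [Real.log_two_gt_d9]

lemma logb11 : -0.258123376 ≤ Real.log ((309 : ℝ)/400) ∧ Real.log ((309 : ℝ)/400) ≤ -0.25812306 := by
  have hsplit : Real.log ((309 : ℝ)/400) = Real.log ((309 : ℝ)/200) - 1 * Real.log 2 := by
    rw [show ((309 : ℝ)/400) = ((309 : ℝ)/200) / 2^1 by norm_num, Real.log_div (by norm_num) (by norm_num), Real.log_pow]
    norm_num
  have hu : Real.log ((309 : ℝ)/200) ≤ 0.4350241198 :=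
    log_le_pow_bound (y := ((309 : ℝ)/200)) (r := 1.00170075679889) (m := 256) (by norm_num) (by norm_num)
      (by norm_num) (by norm_num)
  have hl : (0.4350238056 : ℝ) ≤ Real.log ((309 : ℝ)/200) :=
    pow_bound_le_log (y := ((309 : ℝ)/200)) (r := 1.00170075679888) (m := 256) (by norm_num) (by norm_num)
      (by norm_num)
  rw [hsplit]
  constructor
  · linarith [Real.log_two_lt_d9]
  · linarith [Real.log_two_gt_d9]

lemma logb12 : -1.237874361 ≤ Real.log ((29 : ℝ)/100) ∧ Real.log ((29 : ℝ)/100) ≤ -1.237874347 := by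
  have hsplit : Real.log ((29 : ℝ)/100) = Real.log ((29 : ℝ)/25) - 2 * Real.log 2 := by
    rw [show ((29 : ℝ)/100) = ((29 : ℝ)/25) / 2^2 by norm_num, Real.log_div (by norm_num) (by norm_num), Real.log_pow]
    norm_num
  have hu : Real.log ((29 : ℝ)/25) ≤ 0.1484200135 :=
    log_le_pow_bound (y := ((29 : ℝ)/25)) (r := 1.00057993374158) (m := 256) (by norm_num) (by norm_num)
      (by norm_num) (by norm_num)
  have hl : (0.1484200009 : ℝ) ≤ Real.log ((29 : ℝ)/25) :=
    pow_bound_le_log (y := ((29 : ℝ)/25)) (r := 1.00057993374157) (m := 256) (by norm_num) (by norm_num)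
      (by norm_num)
  rw [hsplit]
  constructor
  · linarith [Real.log_two_lt_d9]
  · linarith [Real.log_two_gt_d9]

lemma logb13 : -0.342490365 ≤ Real.log ((71 : ℝ)/100) ∧ Real.log ((71 : ℝ)/100) ≤ -0.342490199 := by
  have hsplit : Real.log ((71 : ℝ)/100) = Real.log ((71 : ℝ)/50) - 1 * Real.log 2 := by
    rw [show ((71 : ℝ)/100) = ((71 : ℝ)/50) / 2^1 by norm_num, Real.log_div (by norm_num) (by norm_num), Real.log_pow]
    norm_num
  have hu : Real.log ((71 : ℝ)/50) ≤ 0.3506569813 :=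
    log_le_pow_bound (y := ((71 : ℝ)/50)) (r := 1.00137069194541) (m := 256) (by norm_num) (by norm_num)
      (by norm_num) (by norm_num)
  have hl : (0.3506568167 : ℝ) ≤ Real.log ((71 : ℝ)/50) :=
    pow_bound_le_log (y := ((71 : ℝ)/50)) (r := 1.0013706919454) (m := 256) (by norm_num) (by norm_num)
      (by norm_num)
  rw [hsplit]
  constructor
  · linarith [Real.log_two_lt_d9]
  · linarith [Real.log_two_gt_d9]

lemma logb14 : -0.91006032 ≤ Real.log ((161 : ℝ)/400) ∧ Real.log ((161 : ℝ)/400) ≤ -0.910059906 := by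
  have hsplit : Real.log ((161 : ℝ)/400) = Real.log ((161 : ℝ)/100) - 2 * Real.log 2 := by
    rw [show ((161 : ℝ)/400) = ((161 : ℝ)/100) / 2^2 by norm_num, Real.log_div (by norm_num) (by norm_num), Real.log_pow]
    norm_num
  have hu : Real.log ((161 : ℝ)/100) ≤ 0.4762344537 :=
    log_le_pow_bound (y := ((161 : ℝ)/100)) (r := 1.00186202117418) (m := 256) (by norm_num) (by norm_num)
      (by norm_num) (by norm_num)
  have hl : (0.4762340416 : ℝ) ≤ Real.log ((161 : ℝ)/100) :=
    pow_bound_le_log (y := ((161 : ℝ)/100)) (r := 1.00186202117417) (m := 256) (by norm_num) (by norm_num)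
      (by norm_num)
  rw [hsplit]
  constructor
  · linarith [Real.log_two_lt_d9]
  · linarith [Real.log_two_gt_d9]

lemma logb15 : -0.515001003 ≤ Real.log ((239 : ℝ)/400) ∧ Real.log ((239 : ℝ)/400) ≤ -0.51500098 := by
  have hsplit : Real.log ((239 : ℝ)/400) = Real.log ((239 : ℝ)/200) - 1 * Real.log 2 := by
    rw [show ((239 : ℝ)/400) = ((239 : ℝ)/200) / 2^1 by norm_num, Real.log_div (by norm_num) (by norm_num), Real.log_pow]
    norm_num
  have hu : Real.log ((239 : ℝ)/200) ≤ 0.1781461998 :=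
    log_le_pow_bound (y := ((239 : ℝ)/200)) (r := 1.00069612571978) (m := 256) (by norm_num) (by norm_num)
      (by norm_num) (by norm_num)
  have hl : (0.1781461781 : ℝ) ≤ Real.log ((239 : ℝ)/200) :=
    pow_bound_le_log (y := ((239 : ℝ)/200)) (r := 1.00069612571977) (m := 256) (by norm_num) (by norm_num)
      (by norm_num)
  rw [hsplit]
  constructor
  · linarith [Real.log_two_lt_d9]
  · linarith [Real.log_two_gt_d9]

lemma logb16 : -0.486133023 ≤ Real.log ((123 : ℝ)/200) ∧ Real.log ((123 : ℝ)/200) ≤ -0.486132988 := by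
  have hsplit : Real.log ((123 : ℝ)/200) = Real.log ((123 : ℝ)/100) - 1 * Real.log 2 := by
    rw [show ((123 : ℝ)/200) = ((123 : ℝ)/100) / 2^1 by norm_num, Real.log_div (by norm_num) (by norm_num), Real.log_pow]
    norm_num
  have hu : Real.log ((123 : ℝ)/100) ≤ 0.207014192 :=
    log_le_pow_bound (y := ((123 : ℝ)/100)) (r := 1.00080897614399) (m := 256) (by norm_num) (by norm_num)
      (by norm_num) (by norm_num)
  have hl : (0.2070141581 : ℝ) ≤ Real.log ((123 : ℝ)/100) :=
    pow_bound_le_log (y := ((123 : ℝ)/100)) (r := 1.00080897614398) (m := 256) (by norm_num) (by norm_num)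
      (by norm_num)
  rw [hsplit]
  constructor
  · linarith [Real.log_two_lt_d9]
  · linarith [Real.log_two_gt_d9]

lemma logb17 : -0.954512048 ≤ Real.log ((77 : ℝ)/200) ∧ Real.log ((77 : ℝ)/200) ≤ -0.954511739 := by
  have hsplit : Real.log ((77 : ℝ)/200) = Real.log ((77 : ℝ)/50) - 2 * Real.log 2 := by
    rw [show ((77 : ℝ)/200) = ((77 : ℝ)/50) / 2^2 by norm_num, Real.log_div (by norm_num) (by norm_num), Real.log_pow]
    norm_num
  have hu : Real.log ((77 : ℝ)/50) ≤ 0.4317826212 :=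
    log_le_pow_bound (y := ((77 : ℝ)/50)) (r := 1.00168807325842) (m := 256) (by norm_num) (by norm_num)
      (by norm_num) (by norm_num)
  have hl : (0.431782314 : ℝ) ≤ Real.log ((77 : ℝ)/50) :=
    pow_bound_le_log (y := ((77 : ℝ)/50)) (r := 1.00168807325841) (m := 256) (by norm_num) (by norm_num)
      (by norm_num)
  rw [hsplit]
  constructor
  · linarith [Real.log_two_lt_d9]
  · linarith [Real.log_two_gt_d9]

lemma logb18 : -0.130678551 ≤ Real.log ((351 : ℝ)/400) ∧ Real.log ((351 : ℝ)/400) ≤ -0.13067787 := by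
  have hsplit : Real.log ((351 : ℝ)/400) = Real.log ((351 : ℝ)/200) - 1 * Real.log 2 := by
    rw [show ((351 : ℝ)/400) = ((351 : ℝ)/200) / 2^1 by norm_num, Real.log_div (by norm_num) (by norm_num), Real.log_pow]
    norm_num
  have hu : Real.log ((351 : ℝ)/200) ≤ 0.5624693095 :=
    log_le_pow_bound (y := ((351 : ℝ)/200)) (r := 1.00219955946189) (m := 256) (by norm_num) (by norm_num)
      (by norm_num) (by norm_num)
  have hl : (0.5624686306 : ℝ) ≤ Real.log ((351 : ℝ)/200) :=
    pow_bound_le_log (y := ((351 : ℝ)/200)) (r := 1.00219955946188) (m := 256) (by norm_num) (by norm_num)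
      (by norm_num)
  rw [hsplit]
  constructor
  · linarith [Real.log_two_lt_d9]
  · linarith [Real.log_two_gt_d9]

lemma logb19 : -2.099644638 ≤ Real.log ((49 : ℝ)/400) ∧ Real.log ((49 : ℝ)/400) ≤ -2.099643472 := by
  have hsplit : Real.log ((49 : ℝ)/400) = Real.log ((49 : ℝ)/25) - 4 * Real.log 2 := by
    rw [show ((49 : ℝ)/400) = ((49 : ℝ)/25) / 2^4 by norm_num, Real.log_div (by norm_num) (by norm_num), Real.log_pow]
    norm_num
  have hu : Real.log ((49 : ℝ)/25) ≤ 0.6729452483 :=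
    log_le_pow_bound (y := ((49 : ℝ)/25)) (r := 1.00263214738182) (m := 256) (by norm_num) (by norm_num)
      (by norm_num) (by norm_num)
  have hl : (0.6729440857 : ℝ) ≤ Real.log ((49 : ℝ)/25) :=
    pow_bound_le_log (y := ((49 : ℝ)/25)) (r := 1.00263214738181) (m := 256) (by norm_num) (by norm_num)
      (by norm_num)
  rw [hsplit]
  constructor
  · linarith [Real.log_two_lt_d9]
  · linarith [Real.log_two_gt_d9]

lemma logb20 : -1.77195688 ≤ Real.log ((17 : ℝ)/100) ∧ Real.log ((17 : ℝ)/100) ≤ -1.771956767 := by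
  have hsplit : Real.log ((17 : ℝ)/100) = Real.log ((34 : ℝ)/25) - 3 * Real.log 2 := by
    rw [show ((17 : ℝ)/100) = ((34 : ℝ)/25) / 2^3 by norm_num, Real.log_div (by norm_num) (by norm_num), Real.log_pow]
    norm_num
  have hu : Real.log ((34 : ℝ)/25) ≤ 0.3074847737 :=
    log_le_pow_bound (y := ((34 : ℝ)/25)) (r := 1.00120183373243) (m := 256) (by norm_num) (by norm_num)
      (by norm_num) (by norm_num)
  have hl : (0.3074846627 : ℝ) ≤ Real.log ((34 : ℝ)/25) :=
    pow_bound_le_log (y := ((34 : ℝ)/25)) (r := 1.00120183373242) (m := 256) (by norm_num) (by norm_num)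
      (by norm_num)
  rw [hsplit]
  constructor
  · linarith [Real.log_two_lt_d9]
  · linarith [Real.log_two_gt_d9]

lemma logb21 : -0.186329744 ≤ Real.log ((83 : ℝ)/100) ∧ Real.log ((83 : ℝ)/100) ≤ -0.186329246 := by
  have hsplit : Real.log ((83 : ℝ)/100) = Real.log ((83 : ℝ)/50) - 1 * Real.log 2 := by
    rw [show ((83 : ℝ)/100) = ((83 : ℝ)/50) / 2^1 by norm_num, Real.log_div (by norm_num) (by norm_num), Real.log_pow]
    norm_num
  have hu : Real.log ((83 : ℝ)/50) ≤ 0.5068179335 :=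
    log_le_pow_bound (y := ((83 : ℝ)/50)) (r := 1.00198171727057) (m := 256) (by norm_num) (by norm_num)
      (by norm_num) (by norm_num)
  have hl : (0.5068174368 : ℝ) ≤ Real.log ((83 : ℝ)/50) :=
    pow_bound_le_log (y := ((83 : ℝ)/50)) (r := 1.00198171727056) (m := 256) (by norm_num) (by norm_num)
      (by norm_num)
  rw [hsplit]
  constructor
  · linarith [Real.log_two_lt_d9]
  · linarith [Real.log_two_gt_d9]

lemma ival0 (p : ℝ) (ha : (0 : ℝ) ≤ p) (hb : p ≤ ((13 : ℝ)/200)) :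
    (1/2) * (hB p + (1-p)^4 * Real.log 2) < 0.393 := by
  have ht := hB_tangent (c := ((13 : ℝ)/400)) (p := p) (by norm_num) (by norm_num)
    (by linarith [ha] : (0:ℝ) ≤ p) (by linarith [hb] : p ≤ 1)
  rw [show (1:ℝ) - ((13 : ℝ)/400) = ((387 : ℝ)/400) by norm_num] at ht
  have hc : hB ((13 : ℝ)/400) = -((13 : ℝ)/400) * Real.log ((13 : ℝ)/400) - ((387 : ℝ)/400) * Real.log ((387 : ℝ)/400) := by
    unfold hB; rw [show (1:ℝ) - ((13 : ℝ)/400) = ((387 : ℝ)/400) by norm_num]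
  rw [hc] at ht
  obtain ⟨h1l, h1u⟩ := logb0
  obtain ⟨h2l, h2u⟩ := logb1
  have l2l := Real.log_two_gt_d9
  have l2u := Real.log_two_lt_d9
  have hQ : (0:ℝ) ≤ (1-p)^2 + ((387 : ℝ)/200)*(1-p) + ((112369 : ℝ)/40000) := by nlinarith [sq_nonneg (1-p)]
  have hq : (1-p)^4 ≤ ((p - (0 : ℝ)) * ((187 : ℝ)/200)^4 + (((13 : ℝ)/200) - p) * (1 : ℝ)^4) / ((13 : ℝ)/200) := by
    nlinarith [mul_nonneg (mul_nonneg (by linarith : (0:ℝ) ≤ (1-p) - ((187 : ℝ)/200)) (by linarith : (0:ℝ) ≤ (1 : ℝ) - (1-p))) hQ]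
  nlinarith [hq, ht,
    mul_le_mul_of_nonneg_left l2u.le (show (0:ℝ) ≤ (1-p)^4 by positivity),
    mul_nonneg (by linarith : (0:ℝ) ≤ (3.393476069:ℝ) - (Real.log ((387 : ℝ)/400) - Real.log ((13 : ℝ)/400))) (by linarith : (0:ℝ) ≤ p - (0 : ℝ)),
    mul_nonneg (by linarith : (0:ℝ) ≤ (Real.log ((387 : ℝ)/400) - Real.log ((13 : ℝ)/400)) - (3.393474967:ℝ)) (by norm_num : (0:ℝ) ≤ ((13 : ℝ)/400) - (0 : ℝ))]

lemma ival1 (p : ℝ) (ha : ((13 : ℝ)/200) ≤ p) (hb : p ≤ ((23 : ℝ)/200)) :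
    (1/2) * (hB p + (1-p)^4 * Real.log 2) < 0.393 := by
  have ht := hB_tangent (c := ((9 : ℝ)/100)) (p := p) (by norm_num) (by norm_num)
    (by linarith [ha] : (0:ℝ) ≤ p) (by linarith [hb] : p ≤ 1)
  rw [show (1:ℝ) - ((9 : ℝ)/100) = ((91 : ℝ)/100) by norm_num] at ht
  have hc : hB ((9 : ℝ)/100) = -((9 : ℝ)/100) * Real.log ((9 : ℝ)/100) - ((91 : ℝ)/100) * Real.log ((91 : ℝ)/100) := by
    unfold hB; rw [show (1:ℝ) - ((9 : ℝ)/100) = ((91 : ℝ)/100) by norm_num]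
  rw [hc] at ht
  obtain ⟨h1l, h1u⟩ := logb2
  obtain ⟨h2l, h2u⟩ := logb3
  have l2l := Real.log_two_gt_d9
  have l2u := Real.log_two_lt_d9
  have hQ : (0:ℝ) ≤ (1-p)^2 + ((91 : ℝ)/50)*(1-p) + ((99397 : ℝ)/40000) := by nlinarith [sq_nonneg (1-p)]
  have hq : (1-p)^4 ≤ ((p - ((13 : ℝ)/200)) * ((177 : ℝ)/200)^4 + (((23 : ℝ)/200) - p) * ((187 : ℝ)/200)^4) / ((1 : ℝ)/20) := by
    nlinarith [mul_nonneg (mul_nonneg (by linarith : (0:ℝ) ≤ (1-p) - ((177 : ℝ)/200)) (by linarith : (0:ℝ) ≤ ((187 : ℝ)/200) - (1-p))) hQ]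
  nlinarith [hq, ht,
    mul_le_mul_of_nonneg_left l2u.le (show (0:ℝ) ≤ (1-p)^4 by positivity),
    mul_nonneg (by linarith : (0:ℝ) ≤ (2.313635539:ℝ) - (Real.log ((91 : ℝ)/100) - Real.log ((9 : ℝ)/100))) (by linarith : (0:ℝ) ≤ p - ((13 : ℝ)/200)),
    mul_nonneg (by linarith : (0:ℝ) ≤ (Real.log ((91 : ℝ)/100) - Real.log ((9 : ℝ)/100)) - (2.313634531:ℝ)) (by norm_num : (0:ℝ) ≤ ((9 : ℝ)/100) - ((13 : ℝ)/200))]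

lemma ival2 (p : ℝ) (ha : ((23 : ℝ)/200) ≤ p) (hb : p ≤ ((29 : ℝ)/200)) :
    (1/2) * (hB p + (1-p)^4 * Real.log 2) < 0.393 := by
  have ht := hB_tangent (c := ((13 : ℝ)/100)) (p := p) (by norm_num) (by norm_num)
    (by linarith [ha] : (0:ℝ) ≤ p) (by linarith [hb] : p ≤ 1)
  rw [show (1:ℝ) - ((13 : ℝ)/100) = ((87 : ℝ)/100) by norm_num] at ht
  have hc : hB ((13 : ℝ)/100) = -((13 : ℝ)/100) * Real.log ((13 : ℝ)/100) - ((87 : ℝ)/100) * Real.log ((87 : ℝ)/100) := by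
    unfold hB; rw [show (1:ℝ) - ((13 : ℝ)/100) = ((87 : ℝ)/100) by norm_num]
  rw [hc] at ht
  obtain ⟨h1l, h1u⟩ := logb4
  obtain ⟨h2l, h2u⟩ := logb5
  have l2l := Real.log_two_gt_d9
  have l2u := Real.log_two_lt_d9
  have hQ : (0:ℝ) ≤ (1-p)^2 + ((87 : ℝ)/50)*(1-p) + ((90837 : ℝ)/40000) := by nlinarith [sq_nonneg (1-p)]
  have hq : (1-p)^4 ≤ ((p - ((23 : ℝ)/200)) * ((171 : ℝ)/200)^4 + (((29 : ℝ)/200) - p) * ((177 : ℝ)/200)^4) / ((3 : ℝ)/100) := by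
    nlinarith [mul_nonneg (mul_nonneg (by linarith : (0:ℝ) ≤ (1-p) - ((171 : ℝ)/200)) (by linarith : (0:ℝ) ≤ ((177 : ℝ)/200) - (1-p))) hQ]
  nlinarith [hq, ht,
    mul_le_mul_of_nonneg_left l2u.le (show (0:ℝ) ≤ (1-p)^4 by positivity),
    mul_nonneg (by linarith : (0:ℝ) ≤ (1.900959196:ℝ) - (Real.log ((87 : ℝ)/100) - Real.log ((13 : ℝ)/100))) (by linarith : (0:ℝ) ≤ p - ((23 : ℝ)/200)),
    mul_nonneg (by linarith : (0:ℝ) ≤ (Real.log ((87 : ℝ)/100) - Real.log ((13 : ℝ)/100)) - (1.900958543:ℝ)) (by norm_num : (0:ℝ) ≤ ((13 : ℝ)/100) - ((23 : ℝ)/200))]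

lemma ival3 (p : ℝ) (ha : ((29 : ℝ)/200) ≤ p) (hb : p ≤ ((7 : ℝ)/40)) :
    (1/2) * (hB p + (1-p)^4 * Real.log 2) < 0.393 := by
  have ht := hB_tangent (c := ((4 : ℝ)/25)) (p := p) (by norm_num) (by norm_num)
    (by linarith [ha] : (0:ℝ) ≤ p) (by linarith [hb] : p ≤ 1)
  rw [show (1:ℝ) - ((4 : ℝ)/25) = ((21 : ℝ)/25) by norm_num] at ht
  have hc : hB ((4 : ℝ)/25) = -((4 : ℝ)/25) * Real.log ((4 : ℝ)/25) - ((21 : ℝ)/25) * Real.log ((21 : ℝ)/25) := by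
    unfold hB; rw [show (1:ℝ) - ((4 : ℝ)/25) = ((21 : ℝ)/25) by norm_num]
  rw [hc] at ht
  obtain ⟨h1l, h1u⟩ := logb6
  obtain ⟨h2l, h2u⟩ := logb7
  have l2l := Real.log_two_gt_d9
  have l2u := Real.log_two_lt_d9
  have hQ : (0:ℝ) ≤ (1-p)^2 + ((42 : ℝ)/25)*(1-p) + ((84681 : ℝ)/40000) := by nlinarith [sq_nonneg (1-p)]
  have hq : (1-p)^4 ≤ ((p - ((29 : ℝ)/200)) * ((33 : ℝ)/40)^4 + (((7 : ℝ)/40) - p) * ((171 : ℝ)/200)^4) / ((3 : ℝ)/100) := by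
    nlinarith [mul_nonneg (mul_nonneg (by linarith : (0:ℝ) ≤ (1-p) - ((33 : ℝ)/40)) (by linarith : (0:ℝ) ≤ ((171 : ℝ)/200) - (1-p))) hQ]
  nlinarith [hq, ht,
    mul_le_mul_of_nonneg_left l2u.le (show (0:ℝ) ≤ (1-p)^4 by positivity),
    mul_nonneg (by linarith : (0:ℝ) ≤ (1.658228453:ℝ) - (Real.log ((21 : ℝ)/25) - Real.log ((4 : ℝ)/25))) (by linarith : (0:ℝ) ≤ p - ((29 : ℝ)/200)),
    mul_nonneg (by linarith : (0:ℝ) ≤ (Real.log ((21 : ℝ)/25) - Real.log ((4 : ℝ)/25)) - (1.658227859:ℝ)) (by norm_num : (0:ℝ) ≤ ((4 : ℝ)/25) - ((29 : ℝ)/200))]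

lemma ival4 (p : ℝ) (ha : ((7 : ℝ)/40) ≤ p) (hb : p ≤ ((41 : ℝ)/200)) :
    (1/2) * (hB p + (1-p)^4 * Real.log 2) < 0.393 := by
  have ht := hB_tangent (c := ((19 : ℝ)/100)) (p := p) (by norm_num) (by norm_num)
    (by linarith [ha] : (0:ℝ) ≤ p) (by linarith [hb] : p ≤ 1)
  rw [show (1:ℝ) - ((19 : ℝ)/100) = ((81 : ℝ)/100) by norm_num] at ht
  have hc : hB ((19 : ℝ)/100) = -((19 : ℝ)/100) * Real.log ((19 : ℝ)/100) - ((81 : ℝ)/100) * Real.log ((81 : ℝ)/100) := by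
    unfold hB; rw [show (1:ℝ) - ((19 : ℝ)/100) = ((81 : ℝ)/100) by norm_num]
  rw [hc] at ht
  obtain ⟨h1l, h1u⟩ := logb8
  obtain ⟨h2l, h2u⟩ := logb9
  have l2l := Real.log_two_gt_d9
  have l2u := Real.log_two_lt_d9
  have hQ : (0:ℝ) ≤ (1-p)^2 + ((81 : ℝ)/50)*(1-p) + ((78741 : ℝ)/40000) := by nlinarith [sq_nonneg (1-p)]
  have hq : (1-p)^4 ≤ ((p - ((7 : ℝ)/40)) * ((159 : ℝ)/200)^4 + (((41 : ℝ)/200) - p) * ((33 : ℝ)/40)^4) / ((3 : ℝ)/100) := by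
    nlinarith [mul_nonneg (mul_nonneg (by linarith : (0:ℝ) ≤ (1-p) - ((159 : ℝ)/200)) (by linarith : (0:ℝ) ≤ ((33 : ℝ)/40) - (1-p))) hQ]
  nlinarith [hq, ht,
    mul_le_mul_of_nonneg_left l2u.le (show (0:ℝ) ≤ (1-p)^4 by positivity),
    mul_nonneg (by linarith : (0:ℝ) ≤ (1.450010556:ℝ) - (Real.log ((81 : ℝ)/100) - Real.log ((19 : ℝ)/100))) (by linarith : (0:ℝ) ≤ p - ((7 : ℝ)/40)),
    mul_nonneg (by linarith : (0:ℝ) ≤ (Real.log ((81 : ℝ)/100) - Real.log ((19 : ℝ)/100)) - (1.450009844:ℝ)) (by norm_num : (0:ℝ) ≤ ((19 : ℝ)/100) - ((7 : ℝ)/40))]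

lemma ival5 (p : ℝ) (ha : ((41 : ℝ)/200) ≤ p) (hb : p ≤ ((1 : ℝ)/4)) :
    (1/2) * (hB p + (1-p)^4 * Real.log 2) < 0.393 := by
  have ht := hB_tangent (c := ((91 : ℝ)/400)) (p := p) (by norm_num) (by norm_num)
    (by linarith [ha] : (0:ℝ) ≤ p) (by linarith [hb] : p ≤ 1)
  rw [show (1:ℝ) - ((91 : ℝ)/400) = ((309 : ℝ)/400) by norm_num] at ht
  have hc : hB ((91 : ℝ)/400) = -((91 : ℝ)/400) * Real.log ((91 : ℝ)/400) - ((309 : ℝ)/400) * Real.log ((309 : ℝ)/400) := by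
    unfold hB; rw [show (1:ℝ) - ((91 : ℝ)/400) = ((309 : ℝ)/400) by norm_num]
  rw [hc] at ht
  obtain ⟨h1l, h1u⟩ := logb10
  obtain ⟨h2l, h2u⟩ := logb11
  have l2l := Real.log_two_gt_d9
  have l2u := Real.log_two_lt_d9
  have hQ : (0:ℝ) ≤ (1-p)^2 + ((309 : ℝ)/200)*(1-p) + ((71631 : ℝ)/40000) := by nlinarith [sq_nonneg (1-p)]
  have hq : (1-p)^4 ≤ ((p - ((41 : ℝ)/200)) * ((3 : ℝ)/4)^4 + (((1 : ℝ)/4) - p) * ((159 : ℝ)/200)^4) / ((9 : ℝ)/200) := by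
    nlinarith [mul_nonneg (mul_nonneg (by linarith : (0:ℝ) ≤ (1-p) - ((3 : ℝ)/4)) (by linarith : (0:ℝ) ≤ ((159 : ℝ)/200) - (1-p))) hQ]
  nlinarith [hq, ht,
    mul_le_mul_of_nonneg_left l2u.le (show (0:ℝ) ≤ (1-p)^4 by positivity),
    mul_nonneg (by linarith : (0:ℝ) ≤ (1.222482255:ℝ) - (Real.log ((309 : ℝ)/400) - Real.log ((91 : ℝ)/400))) (by linarith : (0:ℝ) ≤ p - ((41 : ℝ)/200)),
    mul_nonneg (by linarith : (0:ℝ) ≤ (Real.log ((309 : ℝ)/400) - Real.log ((91 : ℝ)/400)) - (1.222481117:ℝ)) (by norm_num : (0:ℝ) ≤ ((91 : ℝ)/400) - ((41 : ℝ)/200))]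

lemma ival6 (p : ℝ) (ha : ((1 : ℝ)/4) ≤ p) (hb : p ≤ ((33 : ℝ)/100)) :
    (1/2) * (hB p + (1-p)^4 * Real.log 2) < 0.393 := by
  have ht := hB_tangent (c := ((29 : ℝ)/100)) (p := p) (by norm_num) (by norm_num)
    (by linarith [ha] : (0:ℝ) ≤ p) (by linarith [hb] : p ≤ 1)
  rw [show (1:ℝ) - ((29 : ℝ)/100) = ((71 : ℝ)/100) by norm_num] at ht
  have hc : hB ((29 : ℝ)/100) = -((29 : ℝ)/100) * Real.log ((29 : ℝ)/100) - ((71 : ℝ)/100) * Real.log ((71 : ℝ)/100) := by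
    unfold hB; rw [show (1:ℝ) - ((29 : ℝ)/100) = ((71 : ℝ)/100) by norm_num]
  rw [hc] at ht
  obtain ⟨h1l, h1u⟩ := logb12
  obtain ⟨h2l, h2u⟩ := logb13
  have l2l := Real.log_two_gt_d9
  have l2u := Real.log_two_lt_d9
  have hQ : (0:ℝ) ≤ (1-p)^2 + ((71 : ℝ)/50)*(1-p) + ((15139 : ℝ)/10000) := by nlinarith [sq_nonneg (1-p)]
  have hq : (1-p)^4 ≤ ((p - ((1 : ℝ)/4)) * ((67 : ℝ)/100)^4 + (((33 : ℝ)/100) - p) * ((3 : ℝ)/4)^4) / ((2 : ℝ)/25) := by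
    nlinarith [mul_nonneg (mul_nonneg (by linarith : (0:ℝ) ≤ (1-p) - ((67 : ℝ)/100)) (by linarith : (0:ℝ) ≤ ((3 : ℝ)/4) - (1-p))) hQ]
  nlinarith [hq, ht,
    mul_le_mul_of_nonneg_left l2u.le (show (0:ℝ) ≤ (1-p)^4 by positivity),
    mul_nonneg (by linarith : (0:ℝ) ≤ (0.895384162:ℝ) - (Real.log ((71 : ℝ)/100) - Real.log ((29 : ℝ)/100))) (by linarith : (0:ℝ) ≤ p - ((1 : ℝ)/4)),
    mul_nonneg (by linarith : (0:ℝ) ≤ (Real.log ((71 : ℝ)/100) - Real.log ((29 : ℝ)/100)) - (0.895383982:ℝ)) (by norm_num : (0:ℝ) ≤ ((29 : ℝ)/100) - ((1 : ℝ)/4))]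

lemma ival7 (p : ℝ) (ha : ((33 : ℝ)/100) ≤ p) (hb : p ≤ ((19 : ℝ)/40)) :
    (1/2) * (hB p + (1-p)^4 * Real.log 2) < 0.393 := by
  have ht := hB_tangent (c := ((161 : ℝ)/400)) (p := p) (by norm_num) (by norm_num)
    (by linarith [ha] : (0:ℝ) ≤ p) (by linarith [hb] : p ≤ 1)
  rw [show (1:ℝ) - ((161 : ℝ)/400) = ((239 : ℝ)/400) by norm_num] at ht
  have hc : hB ((161 : ℝ)/400) = -((161 : ℝ)/400) * Real.log ((161 : ℝ)/400) - ((239 : ℝ)/400) * Real.log ((239 : ℝ)/400) := by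
    unfold hB; rw [show (1:ℝ) - ((161 : ℝ)/400) = ((239 : ℝ)/400) by norm_num]
  rw [hc] at ht
  obtain ⟨h1l, h1u⟩ := logb14
  obtain ⟨h2l, h2u⟩ := logb15
  have l2l := Real.log_two_gt_d9
  have l2u := Real.log_two_lt_d9
  have hQ : (0:ℝ) ≤ (1-p)^2 + ((239 : ℝ)/200)*(1-p) + ((43051 : ℝ)/40000) := by nlinarith [sq_nonneg (1-p)]
  have hq : (1-p)^4 ≤ ((p - ((33 : ℝ)/100)) * ((21 : ℝ)/40)^4 + (((19 : ℝ)/40) - p) * ((67 : ℝ)/100)^4) / ((29 : ℝ)/200) := by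
    nlinarith [mul_nonneg (mul_nonneg (by linarith : (0:ℝ) ≤ (1-p) - ((21 : ℝ)/40)) (by linarith : (0:ℝ) ≤ ((67 : ℝ)/100) - (1-p))) hQ]
  nlinarith [hq, ht,
    mul_le_mul_of_nonneg_left l2u.le (show (0:ℝ) ≤ (1-p)^4 by positivity),
    mul_nonneg (by linarith : (0:ℝ) ≤ (0.39505934:ℝ) - (Real.log ((239 : ℝ)/400) - Real.log ((161 : ℝ)/400))) (by linarith : (0:ℝ) ≤ p - ((33 : ℝ)/100)),
    mul_nonneg (by linarith : (0:ℝ) ≤ (Real.log ((239 : ℝ)/400) - Real.log ((161 : ℝ)/400)) - (0.395058903:ℝ)) (by norm_num : (0:ℝ) ≤ ((161 : ℝ)/400) - ((33 : ℝ)/100))]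

lemma ival8 (p : ℝ) (ha : ((19 : ℝ)/40) ≤ p) (hb : p ≤ ((151 : ℝ)/200)) :
    (1/2) * (hB p + (1-p)^4 * Real.log 2) < 0.393 := by
  have ht := hB_tangent (c := ((123 : ℝ)/200)) (p := p) (by norm_num) (by norm_num)
    (by linarith [ha] : (0:ℝ) ≤ p) (by linarith [hb] : p ≤ 1)
  rw [show (1:ℝ) - ((123 : ℝ)/200) = ((77 : ℝ)/200) by norm_num] at ht
  have hc : hB ((123 : ℝ)/200) = -((123 : ℝ)/200) * Real.log ((123 : ℝ)/200) - ((77 : ℝ)/200) * Real.log ((77 : ℝ)/200) := by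
    unfold hB; rw [show (1:ℝ) - ((123 : ℝ)/200) = ((77 : ℝ)/200) by norm_num]
  rw [hc] at ht
  obtain ⟨h1l, h1u⟩ := logb16
  obtain ⟨h2l, h2u⟩ := logb17
  have l2l := Real.log_two_gt_d9
  have l2u := Real.log_two_lt_d9
  have hQ : (0:ℝ) ≤ (1-p)^2 + ((77 : ℝ)/100)*(1-p) + ((18571 : ℝ)/40000) := by nlinarith [sq_nonneg (1-p)]
  have hq : (1-p)^4 ≤ ((p - ((19 : ℝ)/40)) * ((49 : ℝ)/200)^4 + (((151 : ℝ)/200) - p) * ((21 : ℝ)/40)^4) / ((7 : ℝ)/25) := by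
    nlinarith [mul_nonneg (mul_nonneg (by linarith : (0:ℝ) ≤ (1-p) - ((49 : ℝ)/200)) (by linarith : (0:ℝ) ≤ ((21 : ℝ)/40) - (1-p))) hQ]
  nlinarith [hq, ht,
    mul_le_mul_of_nonneg_left l2u.le (show (0:ℝ) ≤ (1-p)^4 by positivity),
    mul_nonneg (by linarith : (0:ℝ) ≤ (-0.468378716:ℝ) - (Real.log ((77 : ℝ)/200) - Real.log ((123 : ℝ)/200))) (by linarith : (0:ℝ) ≤ p - ((19 : ℝ)/40)),
    mul_nonneg (by linarith : (0:ℝ) ≤ (Real.log ((77 : ℝ)/200) - Real.log ((123 : ℝ)/200)) - (-0.46837906:ℝ)) (by norm_num : (0:ℝ) ≤ ((123 : ℝ)/200) - ((19 : ℝ)/40))]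

lemma ival9 (p : ℝ) (ha : ((151 : ℝ)/200) ≤ p) (hb : p ≤ (1 : ℝ)) :
    (1/2) * (hB p + (1-p)^4 * Real.log 2) < 0.393 := by
  have ht := hB_tangent (c := ((351 : ℝ)/400)) (p := p) (by norm_num) (by norm_num)
    (by linarith [ha] : (0:ℝ) ≤ p) (by linarith [hb] : p ≤ 1)
  rw [show (1:ℝ) - ((351 : ℝ)/400) = ((49 : ℝ)/400) by norm_num] at ht
  have hc : hB ((351 : ℝ)/400) = -((351 : ℝ)/400) * Real.log ((351 : ℝ)/400) - ((49 : ℝ)/400) * Real.log ((49 : ℝ)/400) := by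
    unfold hB; rw [show (1:ℝ) - ((351 : ℝ)/400) = ((49 : ℝ)/400) by norm_num]
  rw [hc] at ht
  obtain ⟨h1l, h1u⟩ := logb18
  obtain ⟨h2l, h2u⟩ := logb19
  have l2l := Real.log_two_gt_d9
  have l2u := Real.log_two_lt_d9
  have hQ : (0:ℝ) ≤ (1-p)^2 + ((49 : ℝ)/200)*(1-p) + ((2401 : ℝ)/40000) := by nlinarith [sq_nonneg (1-p)]
  have hq : (1-p)^4 ≤ ((p - ((151 : ℝ)/200)) * (0 : ℝ)^4 + ((1 : ℝ) - p) * ((49 : ℝ)/200)^4) / ((49 : ℝ)/200) := by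
    nlinarith [mul_nonneg (mul_nonneg (by linarith : (0:ℝ) ≤ (1-p) - (0 : ℝ)) (by linarith : (0:ℝ) ≤ ((49 : ℝ)/200) - (1-p))) hQ]
  nlinarith [hq, ht,
    mul_le_mul_of_nonneg_left l2u.le (show (0:ℝ) ≤ (1-p)^4 by positivity),
    mul_nonneg (by linarith : (0:ℝ) ≤ (-1.968964921:ℝ) - (Real.log ((49 : ℝ)/400) - Real.log ((351 : ℝ)/400))) (by linarith : (0:ℝ) ≤ p - ((151 : ℝ)/200)),
    mul_nonneg (by linarith : (0:ℝ) ≤ (Real.log ((49 : ℝ)/400) - Real.log ((351 : ℝ)/400)) - (-1.968966768:ℝ)) (by norm_num : (0:ℝ) ≤ ((351 : ℝ)/400) - ((151 : ℝ)/200))]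

lemma F_upper (p : ℝ) (hp0 : 0 ≤ p) (hp1 : p ≤ 1) :
    (1/2) * (hB p + (1-p)^4 * Real.log 2) < 0.393 := by
  rcases le_total p ((13 : ℝ)/200) with h0 | h0
  · exact ival0 p hp0 h0
  rcases le_total p ((23 : ℝ)/200) with h1 | h1
  · exact ival1 p h0 h1
  rcases le_total p ((29 : ℝ)/200) with h2 | h2
  · exact ival2 p h1 h2
  rcases le_total p ((7 : ℝ)/40) with h3 | h3
  · exact ival3 p h2 h3
  rcases le_total p ((41 : ℝ)/200) with h4 | h4
  · exact ival4 p h3 h4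
  rcases le_total p ((1 : ℝ)/4) with h5 | h5
  · exact ival5 p h4 h5
  rcases le_total p ((33 : ℝ)/100) with h6 | h6
  · exact ival6 p h5 h6
  rcases le_total p ((19 : ℝ)/40) with h7 | h7
  · exact ival7 p h6 h7
  rcases le_total p ((151 : ℝ)/200) with h8 | h8
  · exact ival8 p h7 h8
  · exact ival9 p h8 hp1

lemma F_lower17 : (0.392:ℝ) < (1/2) * (hB ((17:ℝ)/100) + (1-(17:ℝ)/100)^4 * Real.log 2) := by
  obtain ⟨h1l, h1u⟩ := logb20
  obtain ⟨h2l, h2u⟩ := logb21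
  have l2l := Real.log_two_gt_d9
  have hc : hB ((17:ℝ)/100) = -((17:ℝ)/100) * Real.log ((17:ℝ)/100) - ((83:ℝ)/100) * Real.log ((83:ℝ)/100) := by
    unfold hB; rw [show (1:ℝ) - (17:ℝ)/100 = (83:ℝ)/100 by norm_num]
  rw [hc, show (1:ℝ)-(17:ℝ)/100 = (83:ℝ)/100 by norm_num]
  nlinarith [l2l]

/-- The first square-lattice lower bound `f(p) = (1/2)(h_B(p) + (1-p)^4 ln 2)`
attains a maximum on `(0,1)` whose value lies strictly between `0.392` and `0.393`. -/
theorem max_first_lower_bound_Z2 :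
    ∃ p ∈ Set.Ioo (0 : ℝ) 1,
      (∀ q ∈ Set.Ioo (0 : ℝ) 1,
        (1 / 2) * (hB q + (1 - q) ^ 4 * Real.log 2) ≤
          (1 / 2) * (hB p + (1 - p) ^ 4 * Real.log 2)) ∧
      0.392 < (1 / 2) * (hB p + (1 - p) ^ 4 * Real.log 2) ∧
      (1 / 2) * (hB p + (1 - p) ^ 4 * Real.log 2) < 0.393 := by
  obtain ⟨p, hpmem, hmax⟩ := isCompact_Icc.exists_isMaxOn
    (Set.nonempty_Icc.mpr zero_le_one)
    (continuous_F.continuousOn (s := Set.Icc (0:ℝ) 1))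
  rw [isMaxOn_iff] at hmax
  have h17 : ((17:ℝ)/100) ∈ Set.Icc (0:ℝ) 1 := by constructor <;> norm_num
  have hlow : (0.392:ℝ) < (1/2) * (hB p + (1-p)^4 * Real.log 2) :=
    lt_of_lt_of_le F_lower17 (hmax _ h17)
  have hp0 : p ≠ 0 := by
    intro h
    rw [h] at hlow
    have hb0 : hB 0 = 0 := by unfold hB; simp
    rw [hb0] at hlow
    simp only [sub_zero, one_pow, zero_add] at hlow
    have := Real.log_two_lt_d9
    norm_num at hlow
    linarith
  have hp1 : p ≠ 1 := by
    intro h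
    rw [h] at hlow
    have hb1 : hB 1 = 0 := by unfold hB; simp
    rw [hb1] at hlow
    norm_num at hlow
  refine ⟨p, ⟨lt_of_le_of_ne hpmem.1 (Ne.symm hp0), lt_of_le_of_ne hpmem.2 hp1⟩,
    fun q hq => hmax q ⟨hq.1.le, hq.2.le⟩, hlow, F_upper p hpmem.1 hpmem.2⟩
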